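/- Let p, q ≥ 2 be coprime, r : {1,...,p-1} → ℤ with qj + r(j) ≥ 1 and p ∣ (qj + r(j)). Suppose M ∈ ℕ \ pℕ, a ∈ ℕ^k with all a_i ≥ 1, and R ∈ {r(1),...,r(p-1)}^k satisfy M ≡ F_k(a,R) (mod q^k), where F_k(a,R) = Σ_{i=1}^k q^{k-i} p^{-a_{i,k}} R_i ∈ ℤ[1/p] and a_{i,k} = a_i + ... + a_k. Then N := p^{|a|}(M − F_k(a,R))/q^k is a positive integer not divisible by p (provided it is positive), and it satisfies a^{(k)}(N) = a, R^{(k)}(N) = R, and S^k(N) = M, where S is the Syracuse map. -/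

import Mathlib

open Finset

private lemma pval_aux {p : ℕ} (hp : 2 ≤ p) (a n : ℕ) (hn : 0 < n) (h : ¬ p ∣ n) :
    padicValNat p (p ^ a * n) = a := by
  rw [padicValNat_def' (by omega : p ≠ 1) (by positivity)]
  refine multiplicity_eq_of_dvd_of_not_dvd ⟨n, rfl⟩ ?_
  rintro ⟨c, hc⟩
  refine h ⟨c, ?_⟩
  have hpa : 0 < p ^ a := pow_pos (by omega) a
  have : p ^ a * n = p ^ a * (p * c) := by rw [hc, pow_succ]; ring
  exact Nat.eq_of_mul_eq_mul_left hpa this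

private lemma main_aux (p q : ℕ) (hp : 2 ≤ p) (hq : 2 ≤ q) (hpq : Nat.Coprime p q)
    (r : ℕ → ℤ) (hr1 : ∀ j, 1 ≤ j → j < p → 1 ≤ q * j + r j)
    (hr2 : ∀ j, 1 ≤ j → j < p → (p : ℤ) ∣ q * j + r j)
    (S : ℕ → ℕ)
    (hS : ∀ N, S N = ((q * N : ℤ) + r (N % p)).toNat /
      p ^ (padicValNat p ((q * N : ℤ) + r (N % p)).toNat))
    (a : ℕ → ℕ → ℕ)
    (ha : ∀ i N, a i N = padicValNat p ((q * S^[i] N : ℤ) + r (S^[i] N % p)).toNat)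
    (M : ℕ) (hMp : ¬ p ∣ M) :
    ∀ (k : ℕ) (av : ℕ → ℕ) (Rv : ℕ → ℤ) (z : ℤ),
    (∀ i < k, 1 ≤ av i) → (∀ i < k, ∃ j, 1 ≤ j ∧ j < p ∧ Rv i = r j) →
    ((p : ℤ) ^ (∑ i ∈ range k, av i) * M
      - ∑ i ∈ range k, (q : ℤ) ^ (k - 1 - i) * Rv i * (p : ℤ) ^ (∑ j ∈ range i, av j)
      = (q : ℤ) ^ k * z) →
    0 < z →
    ¬ p ∣ z.toNat ∧ (∀ i < k, a i z.toNat = av i ∧ r (S^[i] z.toNat % p) = Rv i) ∧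
      S^[k] z.toNat = M := by
  intro k
  induction k with
  | zero =>
    intro av Rv z _ _ hzint hzpos
    simp only [range_zero, Finset.sum_empty, pow_zero, one_mul, sub_zero] at hzint
    have hzM : z.toNat = M := by omega
    exact ⟨by rwa [hzM], fun i hi => absurd hi (by omega),
      by simpa [Function.iterate_zero] using hzM⟩
  | succ k IH =>
    intro av Rv z hav hRv hzint hzpos
    have hzN : ((z.toNat : ℤ)) = z := Int.toNat_of_nonneg hzpos.le
    set N := z.toNat with hNdef
    obtain ⟨j, hj1, hjp, hRv0⟩ := hRv 0 (Nat.succ_pos k)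
    have hav0 : 1 ≤ av 0 := hav 0 (Nat.succ_pos k)
    have hsum : ∑ i ∈ range (k + 1), av i = av 0 + ∑ i ∈ range k, av (i + 1) := by
      rw [Finset.sum_range_succ']; ring
    have hG : ∑ i ∈ range (k + 1),
          (q : ℤ) ^ (k + 1 - 1 - i) * Rv i * (p : ℤ) ^ (∑ j ∈ range i, av j)
        = (q : ℤ) ^ k * Rv 0 + (p : ℤ) ^ (av 0) *
          ∑ i ∈ range k, (q : ℤ) ^ (k - 1 - i) * Rv (i + 1)
            * (p : ℤ) ^ (∑ j ∈ range i, av (j + 1)) := by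
      rw [Finset.sum_range_succ', Finset.mul_sum]
      rw [add_comm ((q:ℤ) ^ k * Rv 0)]
      congr 1
      · apply Finset.sum_congr rfl
        intro i _
        have h1 : k + 1 - 1 - (i + 1) = k - 1 - i := by omega
        have h2 : ∑ j ∈ range (i + 1), av j = av 0 + ∑ j ∈ range i, av (j + 1) := by
          rw [Finset.sum_range_succ']; ring
        rw [h1, h2, pow_add]; ring
      · simp
    have key : (p : ℤ) ^ (av 0) * ((p : ℤ) ^ (∑ i ∈ range k, av (i + 1)) * M
        - ∑ i ∈ range k, (q : ℤ) ^ (k - 1 - i) * Rv (i + 1)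
            * (p : ℤ) ^ (∑ j ∈ range i, av (j + 1)))
        = (q : ℤ) ^ k * ((q : ℤ) * z + Rv 0) := by
      rw [hsum, hG, pow_add] at hzint
      linear_combination hzint
    have hcopZ : IsCoprime ((p : ℤ)) ((q : ℤ)) := Nat.isCoprime_iff_coprime.mpr hpq
    have hd : (p : ℤ) ^ (av 0) ∣ (q : ℤ) * z + Rv 0 := by
      refine (hcopZ.pow (n := k)).dvd_of_dvd_mul_left ⟨_, key.symm⟩
    obtain ⟨z', hz'⟩ := hd
    have hppow : ((p : ℤ)) ^ (av 0) ≠ 0 := by positivity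
    have hz'int : (p : ℤ) ^ (∑ i ∈ range k, av (i + 1)) * M
        - ∑ i ∈ range k, (q : ℤ) ^ (k - 1 - i) * Rv (i + 1)
            * (p : ℤ) ^ (∑ j ∈ range i, av (j + 1)) = (q : ℤ) ^ k * z' := by
      apply mul_left_cancel₀ hppow
      rw [key, hz']; ring
    -- p divides q*z + r j
    have hpdvd : (p : ℤ) ∣ (q : ℤ) * z + r j := by
      rw [← hRv0, hz']
      exact dvd_mul_of_dvd_left (dvd_pow_self (p : ℤ) (by omega)) z'
    have hjd := hr2 j hj1 hjp
    have hzj : (p : ℤ) ∣ (q : ℤ) * (z - j) := by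
      have h2 : (q : ℤ) * (z - j) = ((q : ℤ) * z + r j) - ((q : ℤ) * j + r j) := by ring
      rw [h2]; exact dvd_sub hpdvd hjd
    have hpzj : (p : ℤ) ∣ z - (j : ℤ) := hcopZ.dvd_of_dvd_mul_left hzj
    have hNmod : N % p = j := by
      have hmod : z % (p : ℤ) = (j : ℤ) % (p : ℤ) := Int.ModEq.symm (Int.modEq_iff_dvd.mpr hpzj)
      have hjmod : (j : ℤ) % (p : ℤ) = j := Int.emod_eq_of_lt (by positivity) (by exact_mod_cast hjp)
      have : ((N % p : ℕ) : ℤ) = (j : ℤ) := by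
        push_cast
        rw [hzN, hmod, hjmod]
      exact_mod_cast this
    have hjN : j ≤ N := hNmod ▸ Nat.mod_le N p
    have hz'pos : 0 < z' := by
      have hjz : (j : ℤ) ≤ z := by rw [← hzN]; exact_mod_cast hjN
      have h1 : 1 ≤ (q : ℤ) * z + r j := by
        have h0 := hr1 j hj1 hjp
        nlinarith
      rw [hRv0] at hz'
      by_contra hc
      push_neg at hc
      have hp0 : (0 : ℤ) < (p : ℤ) ^ (av 0) := by positivity
      nlinarith
    obtain ⟨IH1, IH2, IH3⟩ := IH (fun i => av (i + 1)) (fun i => Rv (i + 1)) z'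
      (fun i hi => hav (i + 1) (by omega)) (fun i hi => hRv (i + 1) (by omega)) hz'int hz'pos
    set N' := z'.toNat with hN'def
    have hz'N : ((N' : ℤ)) = z' := Int.toNat_of_nonneg hz'pos.le
    have hexpr : (q : ℤ) * (N : ℤ) + r (N % p) = (p : ℤ) ^ (av 0) * z' := by
      rw [hNmod, hzN, ← hRv0, hz']
    have htn : ((q : ℤ) * (N : ℤ) + r (N % p)).toNat = p ^ (av 0) * N' := by
      rw [hexpr, ← hz'N]
      have : (p : ℤ) ^ (av 0) * (N' : ℤ) = ((p ^ (av 0) * N' : ℕ) : ℤ) := by push_cast; ring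
      rw [this, Int.toNat_natCast]
    have hN'pos : 0 < N' := by omega
    have hval : padicValNat p (p ^ (av 0) * N') = av 0 := pval_aux hp _ _ hN'pos IH1
    have hSN : S N = N' := by
      rw [hS N, htn, hval]
      exact Nat.mul_div_cancel_left _ (by positivity)
    have hpN : ¬ p ∣ N := by
      intro hd
      have h1 : (p : ℤ) ∣ (q : ℤ) * (N : ℤ) :=
        Dvd.dvd.mul_left (Int.natCast_dvd_natCast.mpr hd) q
      have hdr : (p : ℤ) ∣ (p : ℤ) ^ (av 0) * z' :=
        dvd_mul_of_dvd_left (dvd_pow_self (p : ℤ) (by omega)) z'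
      have h2 : (p : ℤ) ∣ r (N % p) := (dvd_add_right h1).mp (hexpr ▸ hdr)
      rw [hNmod] at h2
      have h3 : (p : ℤ) ∣ (q : ℤ) * (j : ℤ) := by
        have h4 : (q : ℤ) * j = ((q : ℤ) * j + r j) - r j := by ring
        rw [h4]; exact dvd_sub hjd h2
      have h5 : (p : ℤ) ∣ (j : ℤ) := hcopZ.dvd_of_dvd_mul_left h3
      have h6 : p ∣ j := Int.natCast_dvd_natCast.mp h5
      have := Nat.le_of_dvd (by omega) h6
      omega
    refine ⟨hpN, ?_, ?_⟩
    · intro i hi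
      match i with
      | 0 =>
        constructor
        · rw [ha 0 N]
          simp only [Function.iterate_zero_apply]
          rw [htn, hval]
        · simp only [Function.iterate_zero_apply]
          rw [hNmod, hRv0]
      | (m + 1) =>
        have hiter : S^[m + 1] N = S^[m] N' := by
          rw [Function.iterate_succ_apply, hSN]
        constructor
        · rw [ha (m + 1) N, hiter, ← ha m N']
          exact (IH2 m (by omega)).1
        · rw [hiter]
          exact (IH2 m (by omega)).2
    · rw [Function.iterate_succ_apply, hSN]
      exact IH3

/-- Converse to the iteration formula: if `M ≡ F_k(a,R) (mod q^k)` (after clearing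
`p`-powers) then `N = p^{|a|}(M − F_k(a,R))/q^k`, if positive, is not divisible by `p`
and satisfies `a^{(k)}(N) = a`, `R^{(k)}(N) = R`, `S^k(N) = M`. -/
theorem stmt14 (p q : ℕ) (hp : 2 ≤ p) (hq : 2 ≤ q) (hpq : Nat.Coprime p q)
    (r : ℕ → ℤ) (hr1 : ∀ j, 1 ≤ j → j < p → 1 ≤ q * j + r j)
    (hr2 : ∀ j, 1 ≤ j → j < p → (p : ℤ) ∣ q * j + r j)
    (S : ℕ → ℕ)
    (hS : ∀ N, S N = ((q * N : ℤ) + r (N % p)).toNat /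
      p ^ (padicValNat p ((q * N : ℤ) + r (N % p)).toNat))
    (a : ℕ → ℕ → ℕ)
    (ha : ∀ i N, a i N = padicValNat p ((q * S^[i] N : ℤ) + r (S^[i] N % p)).toNat)
    (k : ℕ) (av : ℕ → ℕ) (hav : ∀ i < k, 1 ≤ av i)
    (Rv : ℕ → ℤ) (hRv : ∀ i < k, ∃ j, 1 ≤ j ∧ j < p ∧ Rv i = r j)
    (M : ℕ) (hM : 1 ≤ M) (hMp : ¬ p ∣ M)
    (Fk : ℚ)
    (hFk : Fk = ∑ i ∈ Finset.range k,
      (q : ℚ) ^ (k - 1 - i) * (Rv i : ℚ) / (p : ℚ) ^ (∑ j ∈ Finset.Ico i k, av j))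
    (z : ℤ)
    (hz : (p : ℚ) ^ (∑ i ∈ Finset.range k, av i) * ((M : ℚ) - Fk) = (q : ℚ) ^ k * z)
    (hzpos : 0 < z) :
    ¬ p ∣ z.toNat ∧
    (∀ i < k, a i z.toNat = av i ∧ r (S^[i] z.toNat % p) = Rv i) ∧
    S^[k] z.toNat = M := by
  have hclear : (p : ℚ) ^ (∑ i ∈ range k, av i) * Fk
      = ((∑ i ∈ range k, (q : ℤ) ^ (k - 1 - i) * Rv i
          * (p : ℤ) ^ (∑ j ∈ range i, av j) : ℤ) : ℚ) := by
    rw [hFk, Finset.mul_sum]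
    push_cast
    apply Finset.sum_congr rfl
    intro i hi
    have him : i ≤ k := le_of_lt (Finset.mem_range.mp hi)
    have hsplit : (∑ j ∈ range i, av j) + (∑ j ∈ Finset.Ico i k, av j)
        = ∑ j ∈ range k, av j := Finset.sum_range_add_sum_Ico _ him
    rw [← hsplit, pow_add]
    have hppos : (p : ℚ) ≠ 0 := by positivity
    field_simp
  have hzint : (p : ℤ) ^ (∑ i ∈ range k, av i) * M
      - ∑ i ∈ range k, (q : ℤ) ^ (k - 1 - i) * Rv i * (p : ℤ) ^ (∑ j ∈ range i, av j)
      = (q : ℤ) ^ k * z := by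
    have hQ : (p : ℚ) ^ (∑ i ∈ range k, av i) * M
        - ((∑ i ∈ range k, (q : ℤ) ^ (k - 1 - i) * Rv i
            * (p : ℤ) ^ (∑ j ∈ range i, av j) : ℤ) : ℚ)
        = (q : ℚ) ^ k * z := by
      rw [← hclear]; linear_combination hz
    exact_mod_cast hQ
  exact main_aux p q hp hq hpq r hr1 hr2 S hS a ha M hMp k av Rv z hav hRv hzint hzpos
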